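/- Let n, m be positive integers and let f, f' : ℤ → ℤ be strictly increasing maps satisfying f(x+n) = f(x)+m and f'(x+n) = f'(x)+m for all x ∈ ℤ. If f(x) ≡ f'(x) (mod m) for all x ∈ ℤ, then there exists k ∈ ℤ such that f(x) = f'(x) + k·m for all x ∈ ℤ. -/

import Mathlib

/-- A strictly increasing morphism of Connes' cyclic category `Λ` is determined, up to
the equivalence `f ∼ f + k·m`, by the induced map on residues modulo `m`. -/
theorem stmt11 (n m : ℕ) (hn : 0 < n) (hm : 0 < m) (f f' : ℤ → ℤ)
    (hf : StrictMono f) (hf' : StrictMono f')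
    (hfn : ∀ x : ℤ, f (x + n) = f x + m) (hf'n : ∀ x : ℤ, f' (x + n) = f' x + m)
    (hcong : ∀ x : ℤ, (m : ℤ) ∣ (f x - f' x)) :
    ∃ k : ℤ, ∀ x : ℤ, f x = f' x + k * m := by
  have hper : ∀ x : ℤ, f (x + n) - f' (x + n) = f x - f' x := by
    intro x; rw [hfn x, hf'n x]; ring
  have hperk : ∀ (q : ℤ) (x : ℤ), f (x + q * n) - f' (x + q * n) = f x - f' x := by
    intro q
    induction q using Int.induction_on with
    | zero => simp
    | succ i ih =>
      intro x
      have h1 : x + ((i : ℤ) + 1) * n = (x + i * n) + n := by ring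
      rw [h1, hper, ih]
    | pred i ih =>
      intro x
      have h1 : x + (-(i : ℤ) - 1) * n = (x + (-(i : ℤ)) * n) - n := by ring
      have h2 := hper ((x + (-(i : ℤ)) * n) - n)
      rw [h1]
      rw [sub_add_cancel] at h2
      rw [← h2, ih]
  have hconst : ∀ x : ℤ, f x - f' x = f 0 - f' 0 := by
    intro x
    have hxd : x = x % n + (x / n) * n := by
      rw [mul_comm]; exact (Int.emod_add_mul_ediv x n).symm
    have hr0 : 0 ≤ x % n := Int.emod_nonneg x (by exact_mod_cast hn.ne')
    have hrn : x % n < n := Int.emod_lt_of_pos x (by exact_mod_cast hn)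
    rw [hxd, hperk]
    set r := x % n with hrdef
    rcases eq_or_lt_of_le hr0 with h0 | h0
    · rw [← h0]
    · -- 0 < r < n
      have hfr1 : f 0 + 1 ≤ f r := by
        have := hf h0
        omega
      have hfr2 : f r ≤ f 0 + m - 1 := by
        have h1 : f r < f (0 + n) := hf (by omega)
        rw [hfn 0] at h1
        omega
      have hf'r1 : f' 0 + 1 ≤ f' r := by
        have := hf' h0
        omega
      have hf'r2 : f' r ≤ f' 0 + m - 1 := by
        have h1 : f' r < f' (0 + n) := hf' (by omega)
        rw [hf'n 0] at h1
        omega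
      have hdvd : (m : ℤ) ∣ ((f r - f' r) - (f 0 - f' 0)) :=
        dvd_sub (hcong r) (hcong 0)
      have := Int.eq_zero_of_abs_lt_dvd hdvd (by
        rw [abs_lt]
        constructor <;> omega)
      omega
  obtain ⟨k, hk⟩ := hcong 0
  exact ⟨k, fun x => by have h := hconst x; rw [hk] at h; linarith⟩
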